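/- Let G be as in Eda's lemma (pure subgroup of P containing S, closed under multiplication by d) and suppose additionally that every homomorphism G → ℤ annihilates all but finitely many of the unit vectors e_n. Then every homomorphism f : G → ℤ has the form f(x) = Σ_{i<n} f(e_i)·x(i) for some n, and in particular extends to a homomorphism P → ℤ. -/

import Mathlib

theorem stmt_16 (G : AddSubgroup (ℕ → ℤ))
    (p q : ℕ → ℕ) (hp : ∀ n, (p n).Prime) (hq : ∀ n, (q n).Prime)
    (hpm : StrictMono p) (hqm : StrictMono q)
    (hdisj : Disjoint (Set.range p) (Set.range q))
    (d : ℕ → ℤ) (hd1 : ∀ n, ∀ k ≤ n, (p k : ℤ) ∣ d n)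
    (hd2 : ∀ n, ∀ k ≤ n, d n ≡ -1 [ZMOD (q k)])
    -- `G` contains `S`, the finitely supported sequences :
    (hS : ∀ x : ℕ → ℤ, (Function.support x).Finite → x ∈ G)
    -- `G` is pure in `P` :
    (hpure : ∀ x ∈ G, ∀ m : ℤ, (∃ y : ℕ → ℤ, x = m • y) → ∃ y ∈ G, x = m • y)
    -- `G` is closed under componentwise multiplication by `d` :
    (hclosed : ∀ x ∈ G, (fun n => d n * x n) ∈ G)
    (e : ℕ → G) (he : ∀ n, (e n : ℕ → ℤ) = Pi.single n 1)
    -- every homomorphism `G → ℤ` annihilates all but finitely many `e n` :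
    (hSpecker : ∀ g : G →+ ℤ, {n : ℕ | g (e n) ≠ 0}.Finite)
    (f : G →+ ℤ) :
    (∃ n : ℕ, ∀ x : G, f x = ∑ i ∈ Finset.range n, f (e i) * (x : ℕ → ℤ) i) ∧
      ∃ F : (ℕ → ℤ) →+ ℤ, ∀ x : G, F (x : ℕ → ℤ) = f x := by
  classical
  obtain ⟨N, hN⟩ : ∃ N : ℕ, ∀ i, N ≤ i → f (e i) = 0 := by
    obtain ⟨B, hB⟩ := (hSpecker f).bddAbove
    refine ⟨B + 1, fun i hi => ?_⟩
    by_contra hne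
    have : i ≤ B := hB hne
    omega
  -- the candidate functional on all of `P`
  set F : (ℕ → ℤ) →+ ℤ :=
    { toFun := fun x => ∑ i ∈ Finset.range N, f (e i) * x i
      map_zero' := by simp
      map_add' := fun a b => by
        simp [mul_add, Finset.sum_add_distrib] } with hF
  have hFapp : ∀ x : ℕ → ℤ, F x = ∑ i ∈ Finset.range N, f (e i) * x i := fun _ => rfl
  set g : G →+ ℤ := f - F.comp G.subtype with hg
  have hgapp : ∀ x : G, g x = f x - F (x : ℕ → ℤ) := fun _ => rfl
  have hge : ∀ i, g (e i) = 0 := by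
    intro i
    rw [hgapp, hFapp, he i]
    have : ∀ j ∈ Finset.range N, f (e j) * (Pi.single i 1 : ℕ → ℤ) j
        = if j = i then f (e j) else 0 := by
      intro j _
      rw [Pi.single_apply]
      split <;> simp_all
    rw [Finset.sum_congr rfl this, Finset.sum_ite_eq' (Finset.range N) i fun j => f (e j)]
    by_cases hi : i ∈ Finset.range N
    · simp [hi]
    · have : f (e i) = 0 := hN i (by simpa using hi)
      simp [hi, this]
  -- key divisibility lemma
  have key : ∀ (r : ℕ → ℕ), (∀ k, 2 ≤ r k) → ∀ y : G,
      (∀ m j : ℕ, m ≤ j → (∏ k ∈ Finset.range (m + 1), (r k : ℤ)) ∣ (y : ℕ → ℤ) j) →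
      g y = 0 := by
    intro r hr y hy
    have hdvd : ∀ m : ℕ, (∏ k ∈ Finset.range (m + 1), (r k : ℤ)) ∣ g y := by
      intro m
      set R : ℤ := ∏ k ∈ Finset.range (m + 1), (r k : ℤ) with hR
      set T : G := ∑ i ∈ Finset.range m, (y : ℕ → ℤ) i • e i with hT
      have hgT : g T = 0 := by
        rw [hT, map_sum]
        simp [hge]
      have hTcoe : ∀ j, (T : ℕ → ℤ) j = if j < m then (y : ℕ → ℤ) j else 0 := by
        intro j
        rw [hT]
        push_cast
        rw [Finset.sum_apply]
        have : ∀ i ∈ Finset.range m, ((y : ℕ → ℤ) i • (e i : ℕ → ℤ)) j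
            = if i = j then (y : ℕ → ℤ) i else 0 := by
          intro i _
          rw [he i, Pi.smul_apply, Pi.single_apply, smul_eq_mul]
          by_cases h : i = j
          · simp [h]
          · simp [h, Ne.symm h]
        rw [Finset.sum_congr rfl this,
          Finset.sum_ite_eq' (Finset.range m) j fun i => (y : ℕ → ℤ) i]
        simp [Finset.mem_range]
      have hz : ∀ j, R ∣ ((y : ℕ → ℤ) j - (T : ℕ → ℤ) j) := by
        intro j
        rw [hTcoe]
        by_cases hj : j < m
        · simp [hj]
        · rw [if_neg hj, sub_zero]
          exact hy m j (not_lt.mp hj)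
      obtain ⟨w, hwG, hw⟩ := hpure ((y : ℕ → ℤ) - (T : ℕ → ℤ))
        (G.sub_mem y.2 T.2) R
        ⟨fun j => ((y : ℕ → ℤ) j - (T : ℕ → ℤ) j) / R, by
          funext j
          rw [Pi.smul_apply, smul_eq_mul, Int.mul_ediv_cancel' (hz j)]
          rfl⟩
      have hyT : y = T + R • (⟨w, hwG⟩ : G) := by
        apply Subtype.ext
        push_cast
        rw [← hw]
        abel
      have : g y = R * g (⟨w, hwG⟩ : G) := by
        rw [hyT, map_add, hgT, map_zsmul, zero_add, smul_eq_mul]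
      exact ⟨_, this⟩
    by_contra hne
    set n := (g y).natAbs with hn
    have hRle : (2 : ℤ) ^ (n + 1) ≤ ∏ k ∈ Finset.range (n + 1), (r k : ℤ) := by
      calc (2 : ℤ) ^ (n + 1) = ∏ _k ∈ Finset.range (n + 1), (2 : ℤ) := by
            simp
        _ ≤ ∏ k ∈ Finset.range (n + 1), (r k : ℤ) :=
            Finset.prod_le_prod (fun _ _ => by norm_num) (fun k _ => by exact_mod_cast hr k)
    have habs : (0 : ℤ) < |g y| := abs_pos.mpr hne
    have hle : ∏ k ∈ Finset.range (n + 1), (r k : ℤ) ≤ |g y| :=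
      Int.le_of_dvd habs ((dvd_abs _ _).mpr (hdvd n))
    have h1 : |g y| < 2 ^ (n + 1) := by
      have : n < 2 ^ n := Nat.lt_two_pow_self
      have h2 : (n : ℤ) < 2 ^ n := by exact_mod_cast this
      have h3 : |g y| = (n : ℤ) := by
        rw [hn]; exact (Int.abs_eq_natAbs _)
      have : (2 : ℤ) ^ n ≤ 2 ^ (n + 1) := by
        apply pow_le_pow_right₀ <;> omega
      omega
    omega
  -- divisibility of products of distinct primes
  have prodded : ∀ (r : ℕ → ℕ), (∀ k, (r k).Prime) → StrictMono r → ∀ (m : ℕ) (a : ℤ),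
      (∀ k ≤ m, (r k : ℤ) ∣ a) → (∏ k ∈ Finset.range (m + 1), (r k : ℤ)) ∣ a := by
    intro r hr hrm m a ha
    have hnat : (∏ k ∈ Finset.range (m + 1), r k) ∣ a.natAbs := by
      have himg : ∏ k ∈ Finset.range (m + 1), r k
          = ∏ x ∈ (Finset.range (m + 1)).image r, x := by
        rw [Finset.prod_image]
        intro i _ j _ hij
        exact hrm.injective hij
      rw [himg]
      refine Finset.prod_primes_dvd _ ?_ ?_
      · intro x hx
        obtain ⟨k, _, rfl⟩ := Finset.mem_image.mp hx
        exact (hr k).prime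
      · intro x hx
        obtain ⟨k, hk, rfl⟩ := Finset.mem_image.mp hx
        exact Int.natCast_dvd.mp (ha k (by simpa [Finset.mem_range, Nat.lt_succ_iff] using hk))
    have := Int.natCast_dvd.mpr hnat
    rwa [Nat.cast_prod] at this
  -- every g kills every x
  have hgz : ∀ x : G, g x = 0 := by
    intro x
    set y1 : G := ⟨fun n => d n * (x : ℕ → ℤ) n, hclosed _ x.2⟩ with hy1
    have hg1 : g y1 = 0 := by
      refine key p (fun k => (hp k).two_le) y1 ?_
      intro m j hmj
      have : (∏ k ∈ Finset.range (m + 1), (p k : ℤ)) ∣ d j :=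
        prodded p hp hpm m (d j) (fun k hk => hd1 j k (hk.trans hmj))
      exact this.mul_right _
    have hg2 : g (y1 + x) = 0 := by
      refine key q (fun k => (hq k).two_le) (y1 + x) ?_
      intro m j hmj
      have hco : ((y1 + x : G) : ℕ → ℤ) j = (d j + 1) * (x : ℕ → ℤ) j := by
        push_cast
        simp [hy1]
        ring
      rw [hco]
      have : (∏ k ∈ Finset.range (m + 1), (q k : ℤ)) ∣ (d j + 1) := by
        refine prodded q hq hqm m (d j + 1) (fun k hk => ?_)
        have hmod := hd2 j k (hk.trans hmj)
        have : ((q k : ℕ) : ℤ) ∣ (-1 - d j) := Int.ModEq.dvd hmod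
        have h2 : ((q k : ℕ) : ℤ) ∣ -(-1 - d j) := this.neg_right
        simpa [neg_sub, sub_neg_eq_add] using h2
      exact this.mul_right _
    have := hg2
    rw [map_add, hg1, zero_add] at this
    exact this
  have hfx : ∀ x : G, f x = ∑ i ∈ Finset.range N, f (e i) * (x : ℕ → ℤ) i := by
    intro x
    have h0 := hgz x
    rw [hgapp, sub_eq_zero] at h0
    rw [h0, hFapp]
  exact ⟨⟨N, hfx⟩, ⟨F, fun x => by rw [hFapp, ← hfx x]⟩⟩
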